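/- For every Laver tree S ⊆ ω^{<ω} and every partition of [S] into finitely many Borel sets, [S] = A_0 ∪ … ∪ A_{n-1}, there is a Laver tree U ⊆ S with the same stem as S and an index i < n such that [U] ⊆ A_i. -/

import Mathlib

open Set

/-- The initial segment `r ↾ n` of a point of Baire space, as a finite sequence. -/
def seqTake (r : ℕ → ℕ) (n : ℕ) : List ℕ := List.ofFn fun i : Fin n => r i

/-- `[T]`, the set of infinite branches of a tree `T ⊆ ω^{<ω}`. -/
def branches (T : Set (List ℕ)) : Set (ℕ → ℕ) := {r | ∀ n, seqTake r n ∈ T}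

/-- `T` is a Laver tree with stem `s`: `T` is closed under initial segments, `s ∈ T` is
comparable with every element of `T`, and every `t ∈ T` extending `s` has infinitely many
immediate successors in `T`. -/
def IsLaverTreeWithStem (T : Set (List ℕ)) (s : List ℕ) : Prop :=
  s ∈ T ∧ (∀ t ∈ T, ∀ u : List ℕ, u <+: t → u ∈ T) ∧
    (∀ t ∈ T, t <+: s ∨ s <+: t) ∧
    (∀ t ∈ T, s <+: t → {n : ℕ | t ++ [n] ∈ T}.Infinite)

/-! ### basic list facts -/

lemma prefix_eq_of_length {l₁ l₂ : List ℕ} (h : l₁ <+: l₂ ∨ l₂ <+: l₁)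
    (hl : l₁.length = l₂.length) : l₁ = l₂ := by
  rcases h with h | h
  · exact h.eq_of_length hl
  · exact (h.eq_of_length hl.symm).symm

lemma sandwich {u t : List ℕ} {x : ℕ} (h1 : u <+: t) (h2 : t <+: u ++ [x]) :
    t = u ∨ t = u ++ [x] := by
  have hl1 := h1.length_le
  have hl2 := h2.length_le
  simp only [List.length_append, List.length_singleton] at hl2
  rcases Nat.lt_or_ge t.length (u.length + 1) with h | h
  · exact Or.inl ((h1.eq_of_length (by omega)).symm)
  · exact Or.inr (h2.eq_of_length (by simp; omega))

lemma prefix_concat_cases {p u : List ℕ} {x : ℕ} (h : p <+: u ++ [x]) :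
    p <+: u ∨ p = u ++ [x] := by
  rcases Nat.lt_or_ge u.length p.length with hl | hl
  · right
    refine h.eq_of_length ?_
    have := h.length_le
    simp at this ⊢
    omega
  · left
    exact List.prefix_of_prefix_length_le h (List.prefix_append u [x]) hl

/-! ### seqTake facts -/

lemma length_seqTake (r : ℕ → ℕ) (m : ℕ) : (seqTake r m).length = m := by
  simp [seqTake]

lemma seqTake_take (r : ℕ → ℕ) {m m' : ℕ} (h : m ≤ m') :
    (seqTake r m').take m = seqTake r m := by
  apply List.ext_getElem
  · simp [seqTake]; omega
  · intro i h1 h2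
    simp only [seqTake, List.getElem_take, List.getElem_ofFn]

lemma seqTake_prefix (r : ℕ → ℕ) {m m' : ℕ} (h : m ≤ m') :
    seqTake r m <+: seqTake r m' := by
  rw [← seqTake_take r h]; exact List.take_prefix _ _

/-! ### subtree at a node -/

def subtreeAt (T : Set (List ℕ)) (t : List ℕ) : Set (List ℕ) :=
  {u ∈ T | u <+: t ∨ t <+: u}

lemma subtreeAt_subset (T : Set (List ℕ)) (t : List ℕ) : subtreeAt T t ⊆ T :=
  fun _ h => h.1

lemma isLaver_subtreeAt {T : Set (List ℕ)} {s t : List ℕ}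
    (hT : IsLaverTreeWithStem T s) (ht : t ∈ T) (hst : s <+: t) :
    IsLaverTreeWithStem (subtreeAt T t) t := by
  obtain ⟨hsT, hcl, hcomp, hinf⟩ := hT
  refine ⟨⟨ht, Or.inl List.prefix_rfl⟩, ?_, fun u hu => hu.2, ?_⟩
  · rintro u ⟨huT, hu⟩ p hp
    refine ⟨hcl u huT p hp, ?_⟩
    rcases hu with hu | hu
    · exact Or.inl (hp.trans hu)
    · exact List.prefix_or_prefix_of_prefix hp hu
  · rintro u ⟨huT, _⟩ htu
    have := hinf u huT (hst.trans htu)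
    apply this.mono
    intro n hn
    exact ⟨hn, Or.inr (htu.trans (List.prefix_append u [n]))⟩

lemma branches_mono {U T : Set (List ℕ)} (h : U ⊆ T) : branches U ⊆ branches T :=
  fun _ hr m => h (hr m)

lemma branch_stem {T : Set (List ℕ)} {s : List ℕ} (hT : IsLaverTreeWithStem T s)
    {r : ℕ → ℕ} (hr : r ∈ branches T) {m : ℕ} (hm : s.length ≤ m) :
    s <+: seqTake r m := by
  have h1 : seqTake r s.length <+: seqTake r m := seqTake_prefix r hm
  have h2 : seqTake r s.length = s := by
    apply prefix_eq_of_length (hT.2.2.1 _ (hr s.length)) (by simp [length_seqTake])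
  rwa [h2] at h1

/-! ### every Laver tree has a branch -/

lemma exists_branch {T : Set (List ℕ)} {s : List ℕ} (hT : IsLaverTreeWithStem T s) :
    ∃ r, r ∈ branches T := by
  classical
  obtain ⟨hsT, hcl, hcomp, hinf⟩ := hT
  set F : List ℕ → List ℕ := fun t =>
    if h : ({n | t ++ [n] ∈ T}).Infinite then t ++ [h.nonempty.choose] else t ++ [0] with hF
  set g : ℕ → List ℕ := fun k => F^[k] s with hg
  have hgs : ∀ k, g (k + 1) = F (g k) := fun k => Function.iterate_succ_apply' F k s
  have hFlen : ∀ t, (F t).length = t.length + 1 := by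
    intro t; rw [hF]; dsimp only; split <;> simp
  have hFpre : ∀ t, t <+: F t := by
    intro t; rw [hF]; dsimp only; split <;> exact List.prefix_append _ _
  have key : ∀ k, g k ∈ T ∧ s <+: g k ∧ (g k).length = s.length + k := by
    intro k
    induction k with
    | zero => exact ⟨hsT, List.prefix_rfl, rfl⟩
    | succ k ih =>
      obtain ⟨h1, h2, h3⟩ := ih
      have hi : ({n | g k ++ [n] ∈ T}).Infinite := hinf _ h1 h2
      have hFg : F (g k) = g k ++ [hi.nonempty.choose] := by rw [hF]; dsimp only; rw [dif_pos hi]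
      refine ⟨?_, ?_, ?_⟩
      · rw [hgs, hFg]; exact hi.nonempty.choose_spec
      · rw [hgs]; exact h2.trans (hFpre _)
      · rw [hgs, hFlen, h3]; omega
  have mono : ∀ a b, a ≤ b → g a <+: g b := by
    intro a b hab
    induction b with
    | zero =>
      have : a = 0 := by omega
      subst this; exact List.prefix_rfl
    | succ b ih =>
      rcases Nat.lt_or_ge a (b+1) with h | h
      · exact (ih (by omega)).trans (by rw [hgs]; exact hFpre _)
      · have : a = b + 1 := by omega
        subst this; exact List.prefix_rfl
  refine ⟨fun i => (g (i + 1)).getD i 0, ?_⟩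
  intro m
  have hlen : ∀ i, i < (g (i+1)).length := fun i => by rw [(key (i+1)).2.2]; omega
  have hst : seqTake (fun i => (g (i + 1)).getD i 0) m = (g m).take m := by
    apply List.ext_getElem
    · simp [seqTake]; rw [(key m).2.2]; omega
    · intro i h1 h2
      simp only [seqTake, List.getElem_ofFn, List.getElem_take]
      rw [List.getD_eq_getElem _ _ (hlen i)]
      have h3 : i < m := by simpa [seqTake] using h1
      exact (mono (i+1) m (by omega)).getElem (hlen i)
  rw [hst]
  exact hcl _ (key m).1 _ (List.take_prefix _ _)

/-! ### amalgamation -/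

lemma union_amalg {X B : Set _} {u : List ℕ} {I : Set ℕ} (hI : I.Infinite)
    (V : ℕ → Set (List ℕ))
    (hV : ∀ n ∈ I, IsLaverTreeWithStem (V n) (u ++ [n]) ∧ V n ⊆ X ∧ branches (V n) ⊆ B)
    (hX : ∀ p, p <+: u → p ∈ X) :
    ∃ V', IsLaverTreeWithStem V' u ∧ V' ⊆ X ∧ branches V' ⊆ B := by
  classical
  refine ⟨{p | p <+: u} ∪ ⋃ n ∈ I, V n, ⟨?_, ?_, ?_, ?_⟩, ?_, ?_⟩
  · exact Or.inl List.prefix_rfl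
  · rintro q (hq | hq) p hp
    · exact Or.inl (hp.trans hq)
    · simp only [mem_iUnion] at hq
      obtain ⟨n, hn, hq⟩ := hq
      right; simp only [mem_iUnion]
      exact ⟨n, hn, (hV n hn).1.2.1 q hq p hp⟩
  · rintro q (hq | hq)
    · exact Or.inl hq
    · simp only [mem_iUnion] at hq
      obtain ⟨n, hn, hq⟩ := hq
      rcases (hV n hn).1.2.2.1 q hq with h | h
      · rcases prefix_concat_cases h with h | h
        · exact Or.inl h
        · exact Or.inr (h ▸ List.prefix_append u [n])
      · exact Or.inr ((List.prefix_append u [n]).trans h)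
  · rintro t (ht | ht) hut
    · -- t <+: u and u <+: t so t = u
      have : t = u := prefix_eq_of_length (Or.inl ht)
        (le_antisymm ht.length_le hut.length_le)
      subst this
      apply hI.mono
      intro n hn
      right; simp only [mem_iUnion]
      exact ⟨n, hn, (hV n hn).1.1⟩
    · simp only [mem_iUnion] at ht
      obtain ⟨n, hn, ht⟩ := ht
      rcases (hV n hn).1.2.2.1 t ht with h | h
      · rcases sandwich hut h with h' | h'
        · subst h'
          apply hI.mono
          intro m hm
          right; simp only [mem_iUnion]
          exact ⟨m, hm, (hV m hm).1.1⟩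
        · subst h'
          apply ((hV n hn).1.2.2.2 _ ht List.prefix_rfl).mono
          intro m hm
          right; simp only [mem_iUnion]
          exact ⟨n, hn, hm⟩
      · apply ((hV n hn).1.2.2.2 _ ht h).mono
        intro m hm
        right; simp only [mem_iUnion]
        exact ⟨n, hn, hm⟩
  · rintro q (hq | hq)
    · exact hX q hq
    · simp only [mem_iUnion] at hq
      obtain ⟨n, hn, hq⟩ := hq
      exact (hV n hn).2.1 hq
  · -- branches
    intro r hr
    have h1 : ∃ n₀ ∈ I, seqTake r (u.length + 1) = u ++ [n₀] := by
      rcases hr (u.length + 1) with h | h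
      · exfalso
        have := h.length_le
        rw [length_seqTake] at this; omega
      · simp only [mem_iUnion] at h
        obtain ⟨n, hn, h⟩ := h
        refine ⟨n, hn, ?_⟩
        apply prefix_eq_of_length ((hV n hn).1.2.2.1 _ h)
        simp [length_seqTake]
    obtain ⟨n₀, hn₀, h1⟩ := h1
    have hall : ∀ m, seqTake r m ∈ V n₀ := by
      intro m
      rcases le_or_gt m (u.length + 1) with hm | hm
      · have hpre : seqTake r m <+: u ++ [n₀] := h1 ▸ seqTake_prefix r hm
        exact (hV n₀ hn₀).1.2.1 _ (hV n₀ hn₀).1.1 _ hpre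
      · rcases hr m with h | h
        · exfalso
          have := h.length_le
          rw [length_seqTake] at this; omega
        · simp only [mem_iUnion] at h
          obtain ⟨n₁, hn₁, h⟩ := h
          have hcomp := (hV n₁ hn₁).1.2.2.1 _ h
          have hpre : u ++ [n₀] <+: seqTake r m := h1 ▸ seqTake_prefix r (by omega)
          have : n₁ = n₀ := by
            rcases hcomp with hc | hc
            · exfalso
              have := hc.length_le
              rw [length_seqTake] at this
              simp at this; omega
            · have e : u ++ [n₁] = u ++ [n₀] :=
                prefix_eq_of_length (List.prefix_or_prefix_of_prefix hc hpre) (by simp)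
              have := List.append_cancel_left e
              simpa using this
          exact this ▸ h
    exact (hV n₀ hn₀).2.2 hall

/-! ### the bad subtree -/

/-- `t` is a good node w.r.t. `U` and target `B`. -/
def GoodNode (U : Set (List ℕ)) (B : Set (ℕ → ℕ)) (t : List ℕ) : Prop :=
  ∃ V, IsLaverTreeWithStem V t ∧ V ⊆ U ∧ branches V ⊆ B

lemma badtree {U : Set (List ℕ)} {s : List ℕ} (hU : IsLaverTreeWithStem U s)
    (B : Set (ℕ → ℕ)) (hbad : ¬ GoodNode U B s) :
    ∃ U', IsLaverTreeWithStem U' s ∧ U' ⊆ U ∧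
      ∀ t ∈ U', s <+: t → ¬ GoodNode U B t := by
  classical
  obtain ⟨hsU, hcl, hcomp, hinf⟩ := hU
  refine ⟨{u ∈ U | ∀ p, s <+: p → p <+: u → ¬ GoodNode U B p}, ⟨?_, ?_, ?_, ?_⟩, ?_, ?_⟩
  · refine ⟨hsU, fun p hsp hps => ?_⟩
    have : p = s := prefix_eq_of_length (Or.inl hps) (le_antisymm hps.length_le hsp.length_le)
    subst this; exact hbad
  · rintro q ⟨hq, hq2⟩ p hp
    exact ⟨hcl q hq p hp, fun p' h1 h2 => hq2 p' h1 (h2.trans hp)⟩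
  · rintro q ⟨hq, _⟩; exact hcomp q hq
  · rintro u ⟨huU, hu2⟩ hsu
    have hbadu : ¬ GoodNode U B u := hu2 u hsu List.prefix_rfl
    have hN : ({n | u ++ [n] ∈ U}).Infinite := hinf u huU hsu
    by_contra hfin
    rw [Set.not_infinite] at hfin
    have hG : ({n | u ++ [n] ∈ U ∧ GoodNode U B (u ++ [n])}).Infinite := by
      apply (hN.diff hfin).mono
      rintro n ⟨hn, hn2⟩
      refine ⟨hn, ?_⟩
      by_contra hg
      apply hn2
      refine ⟨hn, fun p h1 h2 => ?_⟩
      rcases prefix_concat_cases h2 with h | h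
      · exact hu2 p h1 h
      · subst h; exact hg
    obtain ⟨V', hV'⟩ := union_amalg hG (fun n => if h : GoodNode U B (u ++ [n]) then h.choose else ∅)
      (fun n hn => by
        rw [dif_pos hn.2]
        exact hn.2.choose_spec)
      (fun p hp => hcl u huU p hp)
    exact hbadu ⟨V', hV'⟩
  · exact fun u hu => hu.1
  · exact fun t ht hst => ht.2 t hst List.prefix_rfl

/-! ### Laver decidability -/

def LDec (A : Set (ℕ → ℕ)) : Prop :=
  ∀ T s, IsLaverTreeWithStem T s →
    ∃ U, IsLaverTreeWithStem U s ∧ U ⊆ T ∧ (branches U ⊆ A ∨ branches U ⊆ Aᶜ)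

lemma LDec_empty : LDec (∅ : Set (ℕ → ℕ)) :=
  fun T s hT => ⟨T, hT, Subset.rfl, Or.inr (fun _ _ h => h)⟩

lemma LDec_compl {A : Set (ℕ → ℕ)} (h : LDec A) : LDec Aᶜ := by
  intro T s hT
  obtain ⟨U, h1, h2, h3⟩ := h T s hT
  exact ⟨U, h1, h2, by rwa [compl_compl, or_comm]⟩

/-- sets that are unions of cylinders are Laver-decidable -/
lemma LDec_open {A : Set (ℕ → ℕ)}
    (hA : ∀ r ∈ A, ∃ m, ∀ r', seqTake r' m = seqTake r m → r' ∈ A) : LDec A := by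
  intro T s hT
  by_cases hg : GoodNode T A s
  · obtain ⟨V, h1, h2, h3⟩ := hg
    exact ⟨V, h1, h2, Or.inl h3⟩
  · obtain ⟨T', h1, h2, h3⟩ := badtree hT A hg
    refine ⟨T', h1, h2, Or.inr ?_⟩
    intro r hr hrA
    obtain ⟨m₀, hm₀⟩ := hA r hrA
    set m := max m₀ s.length with hm
    have hmw : ∀ r', seqTake r' m = seqTake r m → r' ∈ A := by
      intro r' h
      apply hm₀
      rw [← seqTake_take r' (le_max_left m₀ s.length), ← seqTake_take r (le_max_left m₀ s.length), h]
    set t := seqTake r m with ht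
    have htT' : t ∈ T' := hr m
    have hst : s <+: t := branch_stem h1 hr (le_max_right _ _)
    apply h3 t htT' hst
    refine ⟨subtreeAt T' t, isLaver_subtreeAt h1 htT' hst, (subtreeAt_subset T' t).trans h2, ?_⟩
    intro r' hr'
    apply hmw
    have hcomp : seqTake r' m <+: t ∨ t <+: seqTake r' m := (hr' m).2
    exact prefix_eq_of_length hcomp (by rw [length_seqTake, ht, length_seqTake])

/-! ### the fusion construction -/

open Classical in
noncomputable def shrinkFn (A : ℕ → Set (ℕ → ℕ)) (hk : ∀ k, LDec (A k))
    (X : Set (List ℕ)) (t : List ℕ) (k : ℕ) : Set (List ℕ) :=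
  if h : IsLaverTreeWithStem X t then (hk k X t h).choose else X

lemma shrinkFn_subset (A : ℕ → Set (ℕ → ℕ)) (hk : ∀ k, LDec (A k))
    (X : Set (List ℕ)) (t : List ℕ) (k : ℕ) : shrinkFn A hk X t k ⊆ X := by
  unfold shrinkFn
  split
  · next h => exact (hk k X t h).choose_spec.2.1
  · exact Subset.rfl

lemma shrinkFn_spec (A : ℕ → Set (ℕ → ℕ)) (hk : ∀ k, LDec (A k))
    {X : Set (List ℕ)} {t : List ℕ} (k : ℕ) (h : IsLaverTreeWithStem X t) :
    IsLaverTreeWithStem (shrinkFn A hk X t k) t ∧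
      (branches (shrinkFn A hk X t k) ⊆ A k ∨ branches (shrinkFn A hk X t k) ⊆ (A k)ᶜ) := by
  unfold shrinkFn
  rw [dif_pos h]
  exact ⟨(hk k X t h).choose_spec.1, (hk k X t h).choose_spec.2.2⟩

noncomputable def WFn (A : ℕ → Set (ℕ → ℕ)) (hk : ∀ k, LDec (A k))
    (T : Set (List ℕ)) (s : List ℕ) : List ℕ → Set (List ℕ)
  | [] => shrinkFn A hk T s 0
  | n :: rest => shrinkFn A hk
      (subtreeAt (WFn A hk T s rest) (s ++ (n :: rest).reverse))
      (s ++ (n :: rest).reverse) (rest.length + 1)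

def okFn (A : ℕ → Set (ℕ → ℕ)) (hk : ∀ k, LDec (A k))
    (T : Set (List ℕ)) (s : List ℕ) : List ℕ → Prop
  | [] => True
  | n :: rest => okFn A hk T s rest ∧ (s ++ (n :: rest).reverse) ∈ WFn A hk T s rest

section Fusion

variable (A : ℕ → Set (ℕ → ℕ)) (hk : ∀ k, LDec (A k)) (T : Set (List ℕ)) (s : List ℕ)

lemma WFn_cons_subset (n : ℕ) (rest : List ℕ) :
    WFn A hk T s (n :: rest) ⊆ WFn A hk T s rest :=
  (shrinkFn_subset A hk _ _ _).trans (subtreeAt_subset _ _)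

lemma WFn_append_subset (a rev : List ℕ) : WFn A hk T s (a ++ rev) ⊆ WFn A hk T s rev := by
  induction a with
  | nil => exact Subset.rfl
  | cons n a ih => exact (WFn_cons_subset A hk T s n (a ++ rev)).trans ih

lemma WFn_subset (rev : List ℕ) : WFn A hk T s rev ⊆ T := by
  induction rev with
  | nil => exact shrinkFn_subset A hk T s 0
  | cons n rest ih => exact (WFn_cons_subset A hk T s n rest).trans ih

lemma okFn_append (a rev : List ℕ) (h : okFn A hk T s (a ++ rev)) : okFn A hk T s rev := by
  induction a with
  | nil => exact h
  | cons n a ih => exact ih h.1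

variable {T s}

lemma okFn_laver (hT : IsLaverTreeWithStem T s) (rev : List ℕ) (h : okFn A hk T s rev) :
    IsLaverTreeWithStem (WFn A hk T s rev) (s ++ rev.reverse) ∧
      (branches (WFn A hk T s rev) ⊆ A rev.length ∨
        branches (WFn A hk T s rev) ⊆ (A rev.length)ᶜ) := by
  induction rev with
  | nil =>
    have := shrinkFn_spec A hk 0 hT
    simpa [WFn] using this
  | cons n rest ih =>
    obtain ⟨h1, h2⟩ := h
    obtain ⟨ihl, _⟩ := ih h1
    have hpre : (s ++ rest.reverse) <+: (s ++ (n :: rest).reverse) := by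
      simp only [List.reverse_cons, ← List.append_assoc]
      exact List.prefix_append _ _
    have hsub := isLaver_subtreeAt ihl h2 hpre
    have := shrinkFn_spec A hk (rest.length + 1) hsub
    exact ⟨(WFn.eq_def A hk T s (n :: rest)) ▸ this.1,
      by rw [WFn.eq_def]; simpa using this.2⟩

end Fusion

/-! ### countable unions -/

lemma LDec_iUnion (A : ℕ → Set (ℕ → ℕ)) (hk : ∀ k, LDec (A k)) : LDec (⋃ k, A k) := by
  intro T s hT
  classical
  set rv : List ℕ → List ℕ := fun u => (u.drop s.length).reverse with hrv
  have node_eq : ∀ u, s <+: u → s ++ (rv u).reverse = u := by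
    rintro u ⟨e, rfl⟩
    simp [hrv, List.drop_left]
  -- the fusion tree
  set U : Set (List ℕ) :=
    {u | u <+: s ∨ (s <+: u ∧ okFn A hk T s (rv u))} with hU
  have hok : ∀ u ∈ U, s <+: u → okFn A hk T s (rv u) := by
    rintro u (hu | hu) hsu
    · have : u = s := prefix_eq_of_length (Or.inl hu) (le_antisymm hu.length_le hsu.length_le)
      subst this
      have : rv u = [] := by simp [hrv]
      rw [this]; trivial
    · exact hu.2
  have rv_append : ∀ t u, s <+: t → t <+: u → ∃ a, rv u = a ++ rv t := by
    rintro t u ⟨e, rfl⟩ ⟨d, rfl⟩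
    refine ⟨d.reverse, ?_⟩
    simp [hrv, List.append_assoc, List.drop_left, List.reverse_append]
  have hstem_mem : ∀ u ∈ U, s <+: u → u ∈ WFn A hk T s (rv u) := by
    intro u hu hsu
    have h1 := (okFn_laver A hk hT (rv u) (hok u hu hsu)).1.1
    rwa [node_eq u hsu] at h1
  have hnodeW : ∀ t u, s <+: t → t <+: u → u ∈ U → u ∈ WFn A hk T s (rv t) := by
    intro t u hst htu huU
    obtain ⟨a, ha⟩ := rv_append t u hst htu
    have := hstem_mem u huU (hst.trans htu)
    rw [ha] at this
    exact WFn_append_subset A hk T s a (rv t) this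
  -- U is a Laver tree with stem s
  have hU_laver : IsLaverTreeWithStem U s := by
    refine ⟨Or.inl List.prefix_rfl, ?_, ?_, ?_⟩
    · rintro u (hu | ⟨hsu, hoku⟩) p hp
      · exact Or.inl (hp.trans hu)
      · rcases List.prefix_or_prefix_of_prefix hp hsu with h | h
        · exact Or.inl h
        · right
          refine ⟨h, ?_⟩
          obtain ⟨a, ha⟩ := rv_append p u h hp
          rw [ha] at hoku
          exact okFn_append A hk T s a (rv p) hoku
    · rintro u (hu | hu)
      · exact Or.inl hu
      · exact Or.inr hu.1
    · intro u huU hsu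
      have hoku := hok u huU hsu
      have hlav := (okFn_laver A hk hT (rv u) hoku).1
      rw [node_eq u hsu] at hlav
      apply (hlav.2.2.2 u hlav.1 List.prefix_rfl).mono
      intro n hn
      right
      refine ⟨hsu.trans (List.prefix_append u [n]), ?_⟩
      have hrveq : rv (u ++ [n]) = n :: rv u := by
        obtain ⟨e, rfl⟩ := hsu
        simp [hrv, List.append_assoc, List.drop_left, List.reverse_append]
      rw [hrveq]
      refine ⟨hoku, ?_⟩
      have : s ++ (n :: rv u).reverse = u ++ [n] := by
        simp only [List.reverse_cons, ← List.append_assoc]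
        rw [show s ++ (rv u).reverse = u from node_eq u hsu]
      rw [this]
      exact hn
  have hUT : U ⊆ T := by
    rintro u (hu | ⟨hsu, _⟩)
    · exact hT.2.1 s hT.1 u hu
    · exact WFn_subset A hk T s (rv u) (hstem_mem u (Or.inr ⟨hsu, by
        exact (hok u (Or.inr ⟨hsu, by assumption⟩) hsu)⟩) hsu)
  have hbranchW : ∀ r ∈ branches U, ∀ k,
      r ∈ branches (WFn A hk T s (rv (seqTake r (s.length + k)))) := by
    intro r hr k
    set t := seqTake r (s.length + k) with htdef
    have htU : t ∈ U := hr (s.length + k)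
    have hst : s <+: t := branch_stem hU_laver hr (by omega)
    intro m
    rcases le_or_gt (s.length + k) m with hm | hm
    · exact hnodeW t (seqTake r m) hst (htdef ▸ seqTake_prefix r hm) (hr m)
    · have hWt := (okFn_laver A hk hT (rv t) (hok t htU hst)).1
      rw [node_eq t hst] at hWt
      exact hWt.2.1 t (hstem_mem t htU hst) _ (htdef ▸ seqTake_prefix r (by omega))
  have hlen_rv : ∀ (r : ℕ → ℕ) (k : ℕ), (rv (seqTake r (s.length + k))).length = k := by
    intro r k
    simp [hrv, length_seqTake]
  -- good/bad
  by_cases hg : GoodNode U (⋃ k, A k) s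
  · obtain ⟨V, h1, h2, h3⟩ := hg
    exact ⟨V, h1, h2.trans hUT, Or.inl h3⟩
  · obtain ⟨U', h1, h2, h3⟩ := badtree hU_laver _ hg
    refine ⟨U', h1, h2.trans hUT, Or.inr ?_⟩
    intro r hr hrB
    obtain ⟨k, hk'⟩ := mem_iUnion.mp hrB
    set t := seqTake r (s.length + k) with htdef
    have htU' : t ∈ U' := hr (s.length + k)
    have htU : t ∈ U := h2 htU'
    have hst : s <+: t := branch_stem h1 hr (by omega)
    have hdec := (okFn_laver A hk hT (rv t) (hok t htU hst)).2
    rw [hlen_rv r k] at hdec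
    rcases hdec with hdec | hdec
    · -- t would be good
      apply h3 t htU' hst
      refine ⟨subtreeAt U t, isLaver_subtreeAt hU_laver htU hst, subtreeAt_subset U t, ?_⟩
      intro r' hr'
      have hr'U : r' ∈ branches U := branches_mono (subtreeAt_subset U t) hr'
      have ht' : seqTake r' (s.length + k) = t := by
        apply prefix_eq_of_length (hr' (s.length + k)).2
        rw [length_seqTake, htdef, length_seqTake]
      have := hbranchW r' hr'U k
      rw [ht'] at this
      exact mem_iUnion.mpr ⟨k, hdec this⟩
    · exact hdec (hbranchW r (branches_mono h2 hr) k) hk'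

/-! ### all Borel sets are Laver-decidable -/

lemma LDec_coord (k : ℕ) (c : Set ℕ) : LDec {r | r k ∈ c} := by
  apply LDec_open
  intro r hr
  refine ⟨k + 1, fun r' h => ?_⟩
  have : r' k = r k := by
    have h2 := List.ofFn_inj.mp h
    have := congrFun h2 ⟨k, Nat.lt_succ_self k⟩
    exact this
  simpa [this] using hr

lemma LDec_of_measurableSet {A : Set (ℕ → ℕ)} (hA : MeasurableSet A) : LDec A := by
  let m' : MeasurableSpace (ℕ → ℕ) :=
    { MeasurableSet' := LDec
      measurableSet_empty := LDec_empty
      measurableSet_compl := fun _ h => LDec_compl h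
      measurableSet_iUnion := fun f hf => LDec_iUnion f hf }
  have hid : @Measurable _ _ m' MeasurableSpace.pi id := by
    apply measurable_pi_iff.mpr
    intro k c _
    exact LDec_coord k c
  exact hid hA


/-- For every Laver tree `S` and every partition `[S] = A_0 ∪ … ∪ A_{n-1}` of its set of
branches into finitely many Borel sets there is a Laver tree `U ⊆ S` with the same stem
and an index `i < n` with `[U] ⊆ A_i`. -/
theorem laver_partition
    (S : Set (List ℕ)) (s : List ℕ) (hS : IsLaverTreeWithStem S s)
    (n : ℕ) (A : Fin n → Set (ℕ → ℕ))
    (hA_meas : ∀ i, MeasurableSet (A i))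
    (hA_disj : Pairwise fun i j => Disjoint (A i) (A j))
    (hA_cover : branches S = ⋃ i, A i) :
    ∃ U : Set (List ℕ), IsLaverTreeWithStem U s ∧ U ⊆ S ∧
      ∃ i : Fin n, branches U ⊆ A i := by
  classical
  set B : ℕ → Set (ℕ → ℕ) := fun k => if h : k < n then A ⟨k, h⟩ else ∅ with hB
  have hBpos : ∀ k (h : k < n), B k = A ⟨k, h⟩ := fun k h => by
    simp only [hB]; rw [dif_pos h]
  have hBneg : ∀ k, ¬ k < n → B k = ∅ := fun k h => by
    simp only [hB]; rw [dif_neg h]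
  have hLD : ∀ k, LDec (B k) := by
    intro k
    by_cases h : k < n
    · rw [hBpos k h]; exact LDec_of_measurableSet (hA_meas _)
    · rw [hBneg k h]; exact LDec_empty
  have iter : ∀ m, ∃ U, IsLaverTreeWithStem U s ∧ U ⊆ S ∧
      ((∃ i, branches U ⊆ A i) ∨ ∀ k < m, branches U ⊆ (B k)ᶜ) := by
    intro m
    induction m with
    | zero => exact ⟨S, hS, Subset.rfl, Or.inr (fun k hk => by omega)⟩
    | succ m ih =>
      obtain ⟨U, hU, hUS, h⟩ := ih
      rcases h with h | h
      · exact ⟨U, hU, hUS, Or.inl h⟩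
      · obtain ⟨U', hU', hU'U, hdec⟩ := hLD m U s hU
        rcases hdec with hdec | hdec
        · by_cases hm : m < n
          · refine ⟨U', hU', hU'U.trans hUS, Or.inl ⟨⟨m, hm⟩, ?_⟩⟩
            rwa [hBpos m hm] at hdec
          · exfalso
            obtain ⟨r, hrU'⟩ := exists_branch hU'
            have := hdec hrU'
            rw [hBneg m hm] at this
            exact this
        · refine ⟨U', hU', hU'U.trans hUS, Or.inr fun k hk => ?_⟩
          rcases Nat.lt_or_ge k m with h' | h'
          · exact (branches_mono hU'U).trans (h k h')
          · have : k = m := by omega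
            subst this; exact hdec
  obtain ⟨U, hU, hUS, h⟩ := iter n
  rcases h with h | h
  · exact ⟨U, hU, hUS, h⟩
  · exfalso
    obtain ⟨r, hrU⟩ := exists_branch hU
    have hrS : r ∈ branches S := branches_mono hUS hrU
    rw [hA_cover] at hrS
    obtain ⟨i, hi⟩ := mem_iUnion.mp hrS
    apply h i.1 i.2 hrU
    rw [hBpos i.1 i.2]
    simpa using hi
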